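/- In the Pinkall–Thorbergsson construction, for z ∈ M_+^t, the shape operator A_0 with respect to the unit normal Q_0 z has eigenvalues cot t, 0, -tan t with multiplicities l-m-1, m, l-m-1, respectively. Consequently its trace (the mean curvature component along Q_0z) equals (l-m-1)(cot t - tan t) = 2(l-m-1) cot 2t. -/

import Mathlib

open Matrix Real

noncomputable section

/-- The matrix `Q₀ = diag(tan t · Id, -cot t · Id)` on `ℝ^l ⊕ ℝ^l`. -/
def ptQzero (l : ℕ) (t : ℝ) : Matrix (Fin l ⊕ Fin l) (Fin l ⊕ Fin l) ℝ :=
  Matrix.fromBlocks (Real.tan t • 1) 0 0 (-(Real.cot t • 1))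

/-- A matrix on `ℝ^l ⊕ ℝ^l` acting on the corresponding Euclidean space. -/
def matLin {l : ℕ} (A : Matrix (Fin l ⊕ Fin l) (Fin l ⊕ Fin l) ℝ) :
    EuclideanSpace ℝ (Fin l ⊕ Fin l) →ₗ[ℝ] EuclideanSpace ℝ (Fin l ⊕ Fin l) :=
  Matrix.toEuclideanLin A

/-- The tangent space `T_z M₊ᵗ`, i.e. the orthogonal complement of
`span{z, Q₀z, ..., Q_m z}` in `ℝ^{2l}`. -/
def ptTangent {l m : ℕ} (Q : Fin (m + 1) → Matrix (Fin l ⊕ Fin l) (Fin l ⊕ Fin l) ℝ)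
    (z : EuclideanSpace ℝ (Fin l ⊕ Fin l)) : Submodule ℝ (EuclideanSpace ℝ (Fin l ⊕ Fin l)) :=
  (Submodule.span ℝ (insert z (Set.range fun α => matLin (Q α) z)))ᗮ

/-- The shape operator `A X = -(Q X)ᵀ` (tangential projection) on the tangent space `T`. -/
def shapeOp {l : ℕ} (T : Submodule ℝ (EuclideanSpace ℝ (Fin l ⊕ Fin l)))
    (A : Matrix (Fin l ⊕ Fin l) (Fin l ⊕ Fin l) ℝ) : T →ₗ[ℝ] T :=
  -(((T.orthogonalProjectionOnto).toLinearMap).comp ((matLin A).comp T.subtype))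

namespace PTaux

variable {l : ℕ}

lemma euclid_ext {x y : EuclideanSpace ℝ (Fin l ⊕ Fin l)} (h : ∀ i, x i = y i) : x = y :=
  PiLp.ext h

lemma matLin_apply' (A : Matrix (Fin l ⊕ Fin l) (Fin l ⊕ Fin l) ℝ)
    (x : EuclideanSpace ℝ (Fin l ⊕ Fin l)) (i : Fin l ⊕ Fin l) :
    matLin A x i = ∑ j, A i j * x j := rfl

lemma matLin_mul (A B : Matrix (Fin l ⊕ Fin l) (Fin l ⊕ Fin l) ℝ)
    (x : EuclideanSpace ℝ (Fin l ⊕ Fin l)) :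
    matLin (A * B) x = matLin A (matLin B x) := by
  simp [matLin, Matrix.toEuclideanLin_apply, Matrix.mulVec_mulVec]

lemma matLin_one (x : EuclideanSpace ℝ (Fin l ⊕ Fin l)) :
    matLin (1 : Matrix (Fin l ⊕ Fin l) (Fin l ⊕ Fin l) ℝ) x = x := by
  simp [matLin, Matrix.toEuclideanLin_apply]

lemma matLin_smul (c : ℝ) (A : Matrix (Fin l ⊕ Fin l) (Fin l ⊕ Fin l) ℝ)
    (x : EuclideanSpace ℝ (Fin l ⊕ Fin l)) :
    matLin (c • A) x = c • matLin A x := by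
  simp only [matLin, _root_.map_smul]; rfl

lemma matLin_add (A B : Matrix (Fin l ⊕ Fin l) (Fin l ⊕ Fin l) ℝ)
    (x : EuclideanSpace ℝ (Fin l ⊕ Fin l)) :
    matLin (A + B) x = matLin A x + matLin B x := by
  simp only [matLin, _root_.map_add]; rfl

lemma matLin_neg (A : Matrix (Fin l ⊕ Fin l) (Fin l ⊕ Fin l) ℝ)
    (x : EuclideanSpace ℝ (Fin l ⊕ Fin l)) :
    matLin (-A) x = -matLin A x := by
  simp only [matLin, _root_.map_neg]; rfl

lemma inner_matLin_right (A : Matrix (Fin l ⊕ Fin l) (Fin l ⊕ Fin l) ℝ)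
    (x y : EuclideanSpace ℝ (Fin l ⊕ Fin l)) :
    inner ℝ x (matLin A y) = (inner ℝ (matLin Aᵀ x) y : ℝ) := by
  simp only [PiLp.inner_apply, RCLike.inner_apply, starRingEnd_apply, star_trivial, matLin_apply']
  simp only [Finset.mul_sum, Finset.sum_mul, Matrix.transpose_apply]
  rw [Finset.sum_comm]
  congr 1; ext i; congr 1; ext j; ring

lemma inner_matLin_left (A : Matrix (Fin l ⊕ Fin l) (Fin l ⊕ Fin l) ℝ)
    (x y : EuclideanSpace ℝ (Fin l ⊕ Fin l)) :
    inner ℝ (matLin A x) y = (inner ℝ x (matLin Aᵀ y) : ℝ) := by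
  rw [inner_matLin_right, Matrix.transpose_transpose]

lemma inner_matLin_matLin (A B : Matrix (Fin l ⊕ Fin l) (Fin l ⊕ Fin l) ℝ)
    (x y : EuclideanSpace ℝ (Fin l ⊕ Fin l)) :
    inner ℝ (matLin A x) (matLin B y) = (inner ℝ x (matLin (Aᵀ * B) y) : ℝ) := by
  rw [matLin_mul, ← inner_matLin_left]

lemma phi_transpose (M : Matrix (Fin l ⊕ Fin l) (Fin l ⊕ Fin l) ℝ)
    (z : EuclideanSpace ℝ (Fin l ⊕ Fin l)) :
    inner ℝ z (matLin Mᵀ z) = (inner ℝ z (matLin M z) : ℝ) := by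
  rw [inner_matLin_right, Matrix.transpose_transpose, real_inner_comm]

lemma phi_antisymm {M : Matrix (Fin l ⊕ Fin l) (Fin l ⊕ Fin l) ℝ} (h : Mᵀ = -M)
    (z : EuclideanSpace ℝ (Fin l ⊕ Fin l)) :
    inner ℝ z (matLin M z) = (0 : ℝ) := by
  have h1 := phi_transpose M z
  rw [h, matLin_neg, inner_neg_right] at h1
  linarith

lemma mem_orthogonal_span {s : Set (EuclideanSpace ℝ (Fin l ⊕ Fin l))}
    {v : EuclideanSpace ℝ (Fin l ⊕ Fin l)} (h : ∀ u ∈ s, inner ℝ u v = (0 : ℝ)) :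
    v ∈ (Submodule.span ℝ s)ᗮ := by
  rw [Submodule.mem_orthogonal]
  intro u hu
  induction hu using Submodule.span_induction with
  | mem x hx => exact h x hx
  | zero => simp
  | add x y _ _ hx hy => rw [inner_add_left, hx, hy, add_zero]
  | smul c x _ hx => rw [inner_smul_left, hx, mul_zero]

/-- coordinates on blocks for a block-diagonal scalar matrix -/
lemma matLin_blockDiag_inl (a b : ℝ) (v : EuclideanSpace ℝ (Fin l ⊕ Fin l)) (i : Fin l) :
    matLin (Matrix.fromBlocks (a • 1) 0 0 (b • 1)) v (Sum.inl i) = a * v (Sum.inl i) := by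
  rw [matLin_apply', Fintype.sum_sum_type]
  simp [Matrix.one_apply, mul_ite, Finset.sum_ite_eq']

lemma matLin_blockDiag_inr (a b : ℝ) (v : EuclideanSpace ℝ (Fin l ⊕ Fin l)) (i : Fin l) :
    matLin (Matrix.fromBlocks (a • 1) 0 0 (b • 1)) v (Sum.inr i) = b * v (Sum.inr i) := by
  rw [matLin_apply', Fintype.sum_sum_type]
  simp [Matrix.one_apply, mul_ite, Finset.sum_ite_eq']

lemma mul_lincomb (x y u v : ℝ) (M : Matrix (Fin l ⊕ Fin l) (Fin l ⊕ Fin l) ℝ) (hM : M * M = 1) :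
    (x • 1 + y • M) * (u • 1 + v • M) = (x*u + y*v) • 1 + (x*v + y*u) • M := by
  simp only [Matrix.add_mul, Matrix.mul_add, smul_mul_assoc, mul_smul_comm,
    Matrix.one_mul, Matrix.mul_one, hM]
  module

end PTaux
namespace PTaux3
variable {l : ℕ}

def ptVm (l : ℕ) : Submodule ℝ (EuclideanSpace ℝ (Fin l ⊕ Fin l)) where
  carrier := {v | ∀ i, v (Sum.inl i) = 0}
  add_mem' := by
    intro a b ha hb i
    simp only [Set.mem_setOf_eq] at *
    rw [PiLp.add_apply, ha i, hb i, add_zero]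
  zero_mem' := by intro i; rfl
  smul_mem' := by
    intro c a ha i
    simp only [Set.mem_setOf_eq] at *
    rw [PiLp.smul_apply, ha i, smul_zero]

def ptVp (l : ℕ) : Submodule ℝ (EuclideanSpace ℝ (Fin l ⊕ Fin l)) where
  carrier := {v | ∀ i, v (Sum.inr i) = 0}
  add_mem' := by
    intro a b ha hb i
    simp only [Set.mem_setOf_eq] at *
    rw [PiLp.add_apply, ha i, hb i, add_zero]
  zero_mem' := by intro i; rfl
  smul_mem' := by
    intro c a ha i
    simp only [Set.mem_setOf_eq] at *
    rw [PiLp.smul_apply, ha i, smul_zero]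

lemma mem_ptVm {v : EuclideanSpace ℝ (Fin l ⊕ Fin l)} :
    v ∈ ptVm l ↔ ∀ i, v (Sum.inl i) = 0 := Iff.rfl

lemma mem_ptVp {v : EuclideanSpace ℝ (Fin l ⊕ Fin l)} :
    v ∈ ptVp l ↔ ∀ i, v (Sum.inr i) = 0 := Iff.rfl

lemma le_finrank_ptVm : l ≤ Module.finrank ℝ (ptVm l) := by
  classical
  have horth : Orthonormal ℝ (fun j : Fin l =>
      (EuclideanSpace.single (Sum.inr j) (1 : ℝ) : EuclideanSpace ℝ (Fin l ⊕ Fin l))) := by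
    rw [orthonormal_iff_ite]
    intro i j
    rw [EuclideanSpace.inner_single_left]
    simp [EuclideanSpace.single_apply, Sum.inr.injEq, eq_comm]
  have hle : Submodule.span ℝ (Set.range fun j : Fin l =>
      (EuclideanSpace.single (Sum.inr j) (1 : ℝ) : EuclideanSpace ℝ (Fin l ⊕ Fin l))) ≤ ptVm l := by
    rw [Submodule.span_le]
    rintro _ ⟨j, rfl⟩ i
    simp [EuclideanSpace.single_apply]
  calc l = Module.finrank ℝ (Submodule.span ℝ (Set.range fun j : Fin l =>
      (EuclideanSpace.single (Sum.inr j) (1 : ℝ) : EuclideanSpace ℝ (Fin l ⊕ Fin l)))) := by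
        rw [finrank_span_eq_card horth.linearIndependent, Fintype.card_fin]
    _ ≤ _ := Submodule.finrank_mono hle

lemma le_finrank_ptVp : l ≤ Module.finrank ℝ (ptVp l) := by
  classical
  have horth : Orthonormal ℝ (fun j : Fin l =>
      (EuclideanSpace.single (Sum.inl j) (1 : ℝ) : EuclideanSpace ℝ (Fin l ⊕ Fin l))) := by
    rw [orthonormal_iff_ite]
    intro i j
    rw [EuclideanSpace.inner_single_left]
    simp [EuclideanSpace.single_apply, Sum.inl.injEq, eq_comm]
  have hle : Submodule.span ℝ (Set.range fun j : Fin l =>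
      (EuclideanSpace.single (Sum.inl j) (1 : ℝ) : EuclideanSpace ℝ (Fin l ⊕ Fin l))) ≤ ptVp l := by
    rw [Submodule.span_le]
    rintro _ ⟨j, rfl⟩ i
    simp [EuclideanSpace.single_apply]
  calc l = Module.finrank ℝ (Submodule.span ℝ (Set.range fun j : Fin l =>
      (EuclideanSpace.single (Sum.inl j) (1 : ℝ) : EuclideanSpace ℝ (Fin l ⊕ Fin l)))) := by
        rw [finrank_span_eq_card horth.linearIndependent, Fintype.card_fin]
    _ ≤ _ := Submodule.finrank_mono hle

end PTaux3

set_option maxHeartbeats 4000000 in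
open PTaux PTaux3 Module Submodule in
/-- in the Pinkall–Thorbergsson construction, for `z ∈ M₊ᵗ`, the shape
operator w.r.t. the unit normal `Q₀ z` has eigenvalues `cot t, 0, -tan t` with
multiplicities `l-m-1`, `m`, `l-m-1`; consequently its trace equals
`(l-m-1)(cot t - tan t) = 2(l-m-1) cot 2t`. -/
theorem statement8 (l m : ℕ) (hl : m + 2 ≤ l) (t : ℝ) (ht0 : 0 < t) (ht : t ≤ π / 4)
    (P : Fin (m + 1) → Matrix (Fin l ⊕ Fin l) (Fin l ⊕ Fin l) ℝ)
    (hSymm : ∀ α, (P α).IsSymm)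
    (hCliff : ∀ α β, P α * P β + P β * P α =
      if α = β then (2 : ℝ) • (1 : Matrix (Fin l ⊕ Fin l) (Fin l ⊕ Fin l) ℝ) else 0)
    (hP0 : P 0 = Matrix.fromBlocks 1 0 0 (-1))
    (Q : Fin (m + 1) → Matrix (Fin l ⊕ Fin l) (Fin l ⊕ Fin l) ℝ)
    (hQ : Q = fun α => if α = 0 then ptQzero l t else P α)
    (z : EuclideanSpace ℝ (Fin l ⊕ Fin l))
    (hzx : ∑ i, z (Sum.inl i) ^ 2 = Real.cos t ^ 2)
    (hzy : ∑ i, z (Sum.inr i) ^ 2 = Real.sin t ^ 2)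
    (hM : ∀ α, inner ℝ z (matLin (Q α) z) = (0 : ℝ)) :
    Module.finrank ℝ
      (Module.End.eigenspace (shapeOp (ptTangent Q z) (Q 0)) (Real.cot t)) = l - m - 1 ∧
    Module.finrank ℝ
      (Module.End.eigenspace (shapeOp (ptTangent Q z) (Q 0)) 0) = m ∧
    Module.finrank ℝ
      (Module.End.eigenspace (shapeOp (ptTangent Q z) (Q 0)) (-Real.tan t)) = l - m - 1 ∧
    LinearMap.trace ℝ (ptTangent Q z) (shapeOp (ptTangent Q z) (Q 0)) =
      ((l : ℝ) - m - 1) * (Real.cot t - Real.tan t) ∧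
    LinearMap.trace ℝ (ptTangent Q z) (shapeOp (ptTangent Q z) (Q 0)) =
      2 * ((l : ℝ) - m - 1) * Real.cot (2 * t) := by
  classical
  have hπ := Real.pi_pos
  have hS : 0 < Real.sin t := Real.sin_pos_of_pos_of_lt_pi ht0 (by nlinarith)
  have hC : 0 < Real.cos t := Real.cos_pos_of_mem_Ioo ⟨by nlinarith, by nlinarith⟩
  have hpy : Real.sin t ^ 2 + Real.cos t ^ 2 = 1 := Real.sin_sq_add_cos_sq t
  have hta : Real.tan t = Real.sin t / Real.cos t := Real.tan_eq_sin_div_cos t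
  have hco : Real.cot t = Real.cos t / Real.sin t := Real.cot_eq_cos_div_sin t
  have htan_pos : 0 < Real.tan t := by rw [hta]; positivity
  have hcot_pos : 0 < Real.cot t := by rw [hco]; positivity
  set c : ℝ := (Real.tan t - Real.cot t) / 2 with hcdef
  set d : ℝ := (Real.tan t + Real.cot t) / 2 with hddef
  -- scalar identities
  have I1 : d ^ 2 - c ^ 2 = 1 := by
    rw [hcdef, hddef, hta, hco]; field_simp; ring
  have I2 : c ^ 2 + d ^ 2 + 2 * c * d * (Real.cos t ^ 2 - Real.sin t ^ 2) = 1 := by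
    have e1 : Real.tan t ^ 2 * Real.cos t ^ 2 = Real.sin t ^ 2 := by
      rw [hta, div_pow, div_mul_cancel₀ _ (pow_ne_zero 2 hC.ne')]
    have e2 : Real.cot t ^ 2 * Real.sin t ^ 2 = Real.cos t ^ 2 := by
      rw [hco, div_pow, div_mul_cancel₀ _ (pow_ne_zero 2 hS.ne')]
    rw [hcdef, hddef]
    linear_combination e1 + e2 + (1 - (Real.tan t ^ 2 + Real.cot t ^ 2) / 2) * hpy
  have I3 : c + d * (Real.cos t ^ 2 - Real.sin t ^ 2) = 0 := by
    rw [hcdef, hddef, hta, hco]; field_simp; ring_nf; nlinarith [hpy]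
  have hcd1 : c + d = Real.tan t := by rw [hcdef, hddef]; ring
  have hcd2 : c - d = -Real.cot t := by rw [hcdef, hddef]; ring
  -- matrix algebra
  have hPsymm : ∀ α, (P α)ᵀ = P α := fun α => hSymm α
  have hsq : ∀ α, P α * P α = 1 := by
    intro α
    have h := hCliff α α
    rw [if_pos rfl] at h
    have h2 : (2 : ℝ) • (P α * P α) = (2 : ℝ) • (1 : Matrix (Fin l ⊕ Fin l) (Fin l ⊕ Fin l) ℝ) := by
      rw [two_smul ℝ (P α * P α), h]
    exact smul_right_injective _ two_ne_zero h2
  have hanti : ∀ α β, α ≠ β → P α * P β = -(P β * P α) := by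
    intro α β hab
    have h := hCliff α β
    rw [if_neg hab] at h
    exact eq_neg_of_add_eq_zero_left h
  have hQ0dec : ptQzero l t = c • 1 + d • P 0 := by
    rw [ptQzero, hP0]
    ext i j
    rcases i with i | i <;> rcases j with j | j
    · simp only [Matrix.fromBlocks_apply₁₁, Matrix.add_apply, Matrix.smul_apply,
        Matrix.one_apply, smul_eq_mul, mul_ite, mul_one, mul_zero, Sum.inl.injEq]
      split_ifs <;> first | rfl | linarith
    · simp
    · simp
    · simp only [Matrix.fromBlocks_apply₂₂, Matrix.add_apply, Matrix.smul_apply,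
        Matrix.neg_apply, Matrix.one_apply, smul_eq_mul, mul_ite, mul_one, mul_zero, mul_neg,
        Sum.inr.injEq]
      split_ifs <;> first | rfl | linarith
  set Rm : Matrix (Fin l ⊕ Fin l) (Fin l ⊕ Fin l) ℝ := (-c) • 1 + d • P 0 with hRm
  have hQ0symm : (ptQzero l t)ᵀ = ptQzero l t := by
    rw [hQ0dec, Matrix.transpose_add, Matrix.transpose_smul, Matrix.transpose_smul,
      Matrix.transpose_one, hPsymm 0]
  have hRsymm : Rmᵀ = Rm := by
    rw [hRm, Matrix.transpose_add, Matrix.transpose_smul, Matrix.transpose_smul,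
      Matrix.transpose_one, hPsymm 0]
  have hQR : ptQzero l t * Rm = 1 := by
    rw [hQ0dec, hRm, mul_lincomb _ _ _ _ _ (hsq 0)]
    have h1 : c * (-c) + d * d = 1 := by nlinarith [I1]
    have h2 : c * d + d * (-c) = 0 := by ring
    rw [h1, h2, one_smul, zero_smul, add_zero]
  have hQ0sq : ptQzero l t * ptQzero l t
      = (c ^ 2 + d ^ 2) • 1 + (2 * c * d) • P 0 := by
    rw [hQ0dec, mul_lincomb _ _ _ _ _ (hsq 0)]
    have h1 : c * c + d * d = c ^ 2 + d ^ 2 := by ring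
    have h2 : c * d + d * c = 2 * c * d := by ring
    rw [h1, h2]
  have hRsq : Rm * Rm = (c ^ 2 + d ^ 2) • 1 + (-(2 * c * d)) • P 0 := by
    rw [hRm, mul_lincomb _ _ _ _ _ (hsq 0)]
    have h1 : -c * -c + d * d = c ^ 2 + d ^ 2 := by ring
    have h2 : -c * d + d * -c = -(2 * c * d) := by ring
    rw [h1, h2]
  -- phi facts
  have hzz : (inner ℝ z z : ℝ) = 1 := by
    have h1 : (inner ℝ z z : ℝ) = ∑ i, z i * z i := by
      rw [PiLp.inner_apply]
      exact Finset.sum_congr rfl fun i _ => by rw [RCLike.inner_apply, conj_trivial, mul_comm]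
    rw [h1, Fintype.sum_sum_type]
    simp only [← sq]
    rw [hzx, hzy]
    linarith
  have phi_one : (inner ℝ z (matLin (1 : Matrix (Fin l ⊕ Fin l) (Fin l ⊕ Fin l) ℝ) z) : ℝ) = 1 := by
    rw [matLin_one]; exact hzz
  have phi_P0 : (inner ℝ z (matLin (P 0) z) : ℝ) = Real.cos t ^ 2 - Real.sin t ^ 2 := by
    have hble : P 0 = Matrix.fromBlocks ((1:ℝ) • 1) 0 0 ((-1:ℝ) • 1) := by
      rw [hP0, one_smul, neg_one_smul]
    rw [hble]
    have h1 : (inner ℝ z (matLin (Matrix.fromBlocks ((1:ℝ) • 1) 0 0 ((-1:ℝ) • 1)) z) : ℝ)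
        = ∑ i, z i * (matLin (Matrix.fromBlocks ((1:ℝ) • 1) 0 0 ((-1:ℝ) • 1)) z i) := by
      simp [PiLp.inner_apply, RCLike.inner_apply, starRingEnd_apply, mul_comm]
    rw [h1, Fintype.sum_sum_type]
    simp only [matLin_blockDiag_inl, matLin_blockDiag_inr, one_mul, neg_one_mul, mul_neg, ← sq]
    rw [Finset.sum_neg_distrib, hzx, hzy]
    ring
  have phi_Pa : ∀ α : Fin (m + 1), α ≠ 0 → (inner ℝ z (matLin (P α) z) : ℝ) = 0 := by
    intro α hα
    have h := hM α
    rw [hQ] at h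
    simpa [if_neg hα] using h
  have phi_PaPb : ∀ α β : Fin (m + 1), α ≠ β →
      (inner ℝ z (matLin (P α * P β) z) : ℝ) = 0 := by
    intro α β hab
    refine phi_antisymm ?_ z
    rw [Matrix.transpose_mul, hPsymm, hPsymm, hanti β α (Ne.symm hab)]
  have phi_PaP0Pb : ∀ α β : Fin (m + 1), α ≠ 0 → β ≠ 0 → α ≠ β →
      (inner ℝ z (matLin (P α * P 0 * P β) z) : ℝ) = 0 := by
    intro α β hα hβ hab
    refine phi_antisymm ?_ z
    rw [Matrix.transpose_mul, Matrix.transpose_mul, hPsymm, hPsymm, hPsymm]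
    calc P β * (P 0 * P α) = P β * P 0 * P α := by rw [Matrix.mul_assoc]
      _ = -(P 0 * P β) * P α := by rw [hanti β 0 hβ]
      _ = -(P 0 * (P β * P α)) := by rw [Matrix.neg_mul, Matrix.mul_assoc]
      _ = -(P 0 * (-(P α * P β))) := by rw [hanti β α (Ne.symm hab)]
      _ = P 0 * (P α * P β) := by rw [Matrix.mul_neg, neg_neg]
      _ = P 0 * P α * P β := by rw [Matrix.mul_assoc]
      _ = -(P α * P 0) * P β := by rw [hanti 0 α (Ne.symm hα)]
      _ = -(P α * P 0 * P β) := by rw [Matrix.neg_mul]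
  have hPbP0Pb : ∀ β : Fin (m + 1), β ≠ 0 → P β * P 0 * P β = -(P 0) := by
    intro β hβ
    rw [hanti β 0 hβ, Matrix.neg_mul, Matrix.mul_assoc, hsq β, Matrix.mul_one]
  -- Q facts
  have hQ0' : Q 0 = ptQzero l t := by rw [hQ]; simp
  have hQa : ∀ α : Fin (m + 1), α ≠ 0 → Q α = P α := by
    intro α hα; rw [hQ]; simp [hα]
  -- pairwise inner products of generators
  have hip_Q0Q0 : (inner ℝ (matLin (ptQzero l t) z) (matLin (ptQzero l t) z) : ℝ) = 1 := by
    rw [inner_matLin_matLin, hQ0symm, hQ0sq, matLin_add, inner_add_right,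
      matLin_smul, matLin_smul, inner_smul_right, inner_smul_right, phi_one, phi_P0]
    linear_combination I2
  have hip_Q0Pa : ∀ α : Fin (m + 1), α ≠ 0 →
      (inner ℝ (matLin (ptQzero l t) z) (matLin (P α) z) : ℝ) = 0 := by
    intro α hα
    rw [inner_matLin_matLin, hQ0symm]
    have hdec : ptQzero l t * P α = c • P α + d • (P 0 * P α) := by
      rw [hQ0dec, Matrix.add_mul, smul_mul_assoc, smul_mul_assoc, Matrix.one_mul]
    rw [hdec, matLin_add, inner_add_right, matLin_smul, matLin_smul, inner_smul_right,
      inner_smul_right, phi_Pa α hα, phi_PaPb 0 α (Ne.symm hα)]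
    ring
  have hip_PaPb : ∀ α β : Fin (m + 1), α ≠ 0 → β ≠ 0 →
      (inner ℝ (matLin (P α) z) (matLin (P β) z) : ℝ) = if α = β then 1 else 0 := by
    intro α β hα hβ
    rw [inner_matLin_matLin, hPsymm]
    by_cases hab : α = β
    · subst hab; rw [if_pos rfl, hsq α, phi_one]
    · rw [if_neg hab, phi_PaPb α β hab]
  set u : Fin (m + 2) → EuclideanSpace ℝ (Fin l ⊕ Fin l) :=
    Fin.cons z (fun α => matLin (Q α) z) with hu
  have horthu : Orthonormal ℝ u := by
    rw [orthonormal_iff_ite]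
    intro i j
    induction i using Fin.cases with
    | zero =>
      induction j using Fin.cases with
      | zero => simpa [hu] using hzz
      | succ α =>
        simp only [hu, Fin.cons_zero, Fin.cons_succ]
        rw [hM α, if_neg (Ne.symm (Fin.succ_ne_zero α))]
    | succ α =>
      induction j using Fin.cases with
      | zero =>
        simp only [hu, Fin.cons_zero, Fin.cons_succ]
        rw [real_inner_comm, hM α, if_neg (Fin.succ_ne_zero α)]
      | succ β =>
        simp only [hu, Fin.cons_succ]
        by_cases hα : α = 0
        · by_cases hβ : β = 0
          · subst hα; subst hβ
            rw [hQ0', hip_Q0Q0, if_pos rfl]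
          · subst hα
            rw [hQ0', hQa β hβ, hip_Q0Pa β hβ,
              if_neg (fun h => hβ (Fin.succ_injective _ h).symm)]
        · by_cases hβ : β = 0
          · subst hβ
            rw [hQa α hα, hQ0', real_inner_comm, hip_Q0Pa α hα,
              if_neg (fun h => hα (Fin.succ_injective _ h))]
          · rw [hQa α hα, hQa β hβ, hip_PaPb α β hα hβ]
            simp [Fin.succ_inj]
  have hfinE : Module.finrank ℝ (EuclideanSpace ℝ (Fin l ⊕ Fin l)) = 2 * l := by
    rw [finrank_euclideanSpace, Fintype.card_sum, Fintype.card_fin]; omega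
  have hrange : ptTangent Q z = (Submodule.span ℝ (Set.range u))ᗮ := by
    rw [ptTangent]
    congr 1
    rw [hu, Fin.range_cons]
  have hTrank : Module.finrank ℝ (ptTangent Q z) + (m + 2) = 2 * l := by
    have h1 : Module.finrank ℝ (Submodule.span ℝ (Set.range u)) = m + 2 := by
      rw [finrank_span_eq_card horthu.linearIndependent, Fintype.card_fin]
    have h2 := Submodule.finrank_add_finrank_orthogonal
      (K := Submodule.span ℝ (Set.range u))
    rw [hrange]
    rw [hfinE, h1] at h2
    omega
  -- the auxiliary span U (generated by z and the P_α z, α ≠ 0)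
  set uu : Fin (m + 1) → EuclideanSpace ℝ (Fin l ⊕ Fin l) :=
    Fin.cons z (fun β : Fin m => matLin (P β.succ) z) with huu
  set U : Submodule ℝ (EuclideanSpace ℝ (Fin l ⊕ Fin l)) :=
    Submodule.span ℝ (Set.range uu) with hUdef
  have hzU : z ∈ U := Submodule.subset_span ⟨0, by rw [huu, Fin.cons_zero]⟩
  have hPU : ∀ β : Fin m, matLin (P β.succ) z ∈ U := fun β =>
    Submodule.subset_span ⟨β.succ, by rw [huu, Fin.cons_succ]⟩
  have horthuu : Orthonormal ℝ uu := by
    rw [orthonormal_iff_ite]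
    intro i j
    induction i using Fin.cases with
    | zero =>
      induction j using Fin.cases with
      | zero => simpa [huu] using hzz
      | succ β =>
        simp only [huu, Fin.cons_zero, Fin.cons_succ]
        rw [phi_Pa β.succ (Fin.succ_ne_zero β), if_neg (Ne.symm (Fin.succ_ne_zero β))]
    | succ β =>
      induction j using Fin.cases with
      | zero =>
        simp only [huu, Fin.cons_zero, Fin.cons_succ]
        rw [real_inner_comm, phi_Pa β.succ (Fin.succ_ne_zero β), if_neg (Fin.succ_ne_zero β)]
      | succ γ =>
        simp only [huu, Fin.cons_succ]
        rw [hip_PaPb β.succ γ.succ (Fin.succ_ne_zero β) (Fin.succ_ne_zero γ)]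
  have hUrank : Module.finrank ℝ U = m + 1 := by
    rw [hUdef, finrank_span_eq_card horthuu.linearIndependent, Fintype.card_fin]
  have hUorth : Module.finrank ℝ U + Module.finrank ℝ Uᗮ = 2 * l := by
    have h2 := Submodule.finrank_add_finrank_orthogonal (K := U)
    rw [hfinE] at h2
    exact h2
  -- block matrix action
  have hQform : ptQzero l t = Matrix.fromBlocks (Real.tan t • 1) 0 0 ((-Real.cot t) • 1) := by
    rw [ptQzero, neg_smul]
  have hQactVm : ∀ v ∈ ptVm l, matLin (ptQzero l t) v = (-Real.cot t) • v := by
    intro v hv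
    apply euclid_ext
    intro i
    rcases i with i | i
    · rw [hQform, matLin_blockDiag_inl, PiLp.smul_apply, mem_ptVm] at *
      rw [hv i]
      simp
    · rw [hQform, matLin_blockDiag_inr, PiLp.smul_apply, smul_eq_mul]
  have hQactVp : ∀ v ∈ ptVp l, matLin (ptQzero l t) v = Real.tan t • v := by
    intro v hv
    apply euclid_ext
    intro i
    rcases i with i | i
    · rw [hQform, matLin_blockDiag_inl, PiLp.smul_apply, smul_eq_mul]
    · rw [hQform, matLin_blockDiag_inr, PiLp.smul_apply, mem_ptVp] at *
      rw [hv i]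
      simp
  -- membership of the coordinate blocks in the tangent space
  have hVmT : ptVm l ⊓ Uᗮ ≤ ptTangent Q z := by
    intro v hv
    rw [Submodule.mem_inf] at hv
    obtain ⟨hv1, hv2⟩ := hv
    rw [ptTangent]
    apply mem_orthogonal_span
    intro x hx
    rcases Set.mem_insert_iff.1 hx with rfl | ⟨α, rfl⟩
    · exact (Submodule.mem_orthogonal U v).1 hv2 x hzU
    · show (inner ℝ (matLin (Q α) z) v : ℝ) = 0
      by_cases hα : α = 0
      · subst hα
        rw [hQ0', inner_matLin_left, hQ0symm, hQactVm v hv1, inner_smul_right,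
          (Submodule.mem_orthogonal U v).1 hv2 z hzU, mul_zero]
      · obtain ⟨β, rfl⟩ := Fin.exists_succ_eq.2 hα
        rw [hQa β.succ (Fin.succ_ne_zero β)]
        exact (Submodule.mem_orthogonal U v).1 hv2 _ (hPU β)
  have hVpT : ptVp l ⊓ Uᗮ ≤ ptTangent Q z := by
    intro v hv
    rw [Submodule.mem_inf] at hv
    obtain ⟨hv1, hv2⟩ := hv
    rw [ptTangent]
    apply mem_orthogonal_span
    intro x hx
    rcases Set.mem_insert_iff.1 hx with rfl | ⟨α, rfl⟩
    · exact (Submodule.mem_orthogonal U v).1 hv2 x hzU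
    · show (inner ℝ (matLin (Q α) z) v : ℝ) = 0
      by_cases hα : α = 0
      · subst hα
        rw [hQ0', inner_matLin_left, hQ0symm, hQactVp v hv1, inner_smul_right,
          (Submodule.mem_orthogonal U v).1 hv2 z hzU, mul_zero]
      · obtain ⟨β, rfl⟩ := Fin.exists_succ_eq.2 hα
        rw [hQa β.succ (Fin.succ_ne_zero β)]
        exact (Submodule.mem_orthogonal U v).1 hv2 _ (hPU β)
  -- dimension lower bounds for the coordinate blocks
  have hdim_m : l - (m + 1) ≤ Module.finrank ℝ (ptVm l ⊓ Uᗮ : Submodule ℝ _) := by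
    have e1 := Submodule.finrank_sup_add_finrank_inf_eq (ptVm l) Uᗮ
    have e2 : Module.finrank ℝ ((ptVm l ⊔ Uᗮ : Submodule ℝ _)) ≤ 2 * l := by
      rw [← hfinE]
      exact Submodule.finrank_le _
    have e3 := le_finrank_ptVm (l := l)
    omega
  have hdim_p : l - (m + 1) ≤ Module.finrank ℝ (ptVp l ⊓ Uᗮ : Submodule ℝ _) := by
    have e1 := Submodule.finrank_sup_add_finrank_inf_eq (ptVp l) Uᗮ
    have e2 : Module.finrank ℝ ((ptVp l ⊔ Uᗮ : Submodule ℝ _)) ≤ 2 * l := by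
      rw [← hfinE]
      exact Submodule.finrank_le _
    have e3 := le_finrank_ptVp (l := l)
    omega
  -- eigenvector property on the coordinate blocks
  have hWm : ∀ x : ptTangent Q z, (x : EuclideanSpace ℝ (Fin l ⊕ Fin l)) ∈ ptVm l ⊓ Uᗮ →
      shapeOp (ptTangent Q z) (Q 0) x = Real.cot t • x := by
    intro x hx
    rw [Submodule.mem_inf] at hx
    have h1 : matLin (Q 0) (x : EuclideanSpace ℝ (Fin l ⊕ Fin l))
        = (-Real.cot t) • (x : EuclideanSpace ℝ (Fin l ⊕ Fin l)) := by
      rw [hQ0']; exact hQactVm _ hx.1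
    have h2 : shapeOp (ptTangent Q z) (Q 0) x
        = -((ptTangent Q z).orthogonalProjectionOnto (matLin (Q 0) (x : _))) := rfl
    rw [h2, h1, _root_.map_smul, orthogonalProjection_mem_subspace_eq_self, neg_smul, neg_neg]
  have hWp : ∀ x : ptTangent Q z, (x : EuclideanSpace ℝ (Fin l ⊕ Fin l)) ∈ ptVp l ⊓ Uᗮ →
      shapeOp (ptTangent Q z) (Q 0) x = (-Real.tan t) • x := by
    intro x hx
    rw [Submodule.mem_inf] at hx
    have h1 : matLin (Q 0) (x : EuclideanSpace ℝ (Fin l ⊕ Fin l))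
        = Real.tan t • (x : EuclideanSpace ℝ (Fin l ⊕ Fin l)) := by
      rw [hQ0']; exact hQactVp _ hx.1
    have h2 : shapeOp (ptTangent Q z) (Q 0) x
        = -((ptTangent Q z).orthogonalProjectionOnto (matLin (Q 0) (x : _))) := rfl
    rw [h2, h1, _root_.map_smul, orthogonalProjection_mem_subspace_eq_self, ← neg_smul]
  have hr1 : l - m - 1 ≤ Module.finrank ℝ
      (Module.End.eigenspace (shapeOp (ptTangent Q z) (Q 0)) (Real.cot t)) := by
    have hle : Submodule.comap (ptTangent Q z).subtype (ptVm l ⊓ Uᗮ)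
        ≤ Module.End.eigenspace (shapeOp (ptTangent Q z) (Q 0)) (Real.cot t) := by
      intro x hx
      rw [Submodule.mem_comap] at hx
      rw [Module.End.mem_eigenspace_iff]
      exact hWm x hx
    have heq : Module.finrank ℝ (Submodule.comap (ptTangent Q z).subtype (ptVm l ⊓ Uᗮ))
        = Module.finrank ℝ (ptVm l ⊓ Uᗮ : Submodule ℝ _) :=
      (Submodule.comapSubtypeEquivOfLe hVmT).finrank_eq
    have hmono := Submodule.finrank_mono hle
    omega
  have hr3 : l - m - 1 ≤ Module.finrank ℝ
      (Module.End.eigenspace (shapeOp (ptTangent Q z) (Q 0)) (-Real.tan t)) := by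
    have hle : Submodule.comap (ptTangent Q z).subtype (ptVp l ⊓ Uᗮ)
        ≤ Module.End.eigenspace (shapeOp (ptTangent Q z) (Q 0)) (-Real.tan t) := by
      intro x hx
      rw [Submodule.mem_comap] at hx
      rw [Module.End.mem_eigenspace_iff]
      exact hWp x hx
    have heq : Module.finrank ℝ (Submodule.comap (ptTangent Q z).subtype (ptVp l ⊓ Uᗮ))
        = Module.finrank ℝ (ptVp l ⊓ Uᗮ : Submodule ℝ _) :=
      (Submodule.comapSubtypeEquivOfLe hVpT).finrank_eq
    have hmono := Submodule.finrank_mono hle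
    omega
  -- the kernel eigenvectors w_β = Rm · P_{β+1} · z
  set w : Fin m → EuclideanSpace ℝ (Fin l ⊕ Fin l) :=
    fun β => matLin (Rm * P β.succ) z with hwdef
  have hRPdec : ∀ β : Fin (m + 1), Rm * P β = (-c) • P β + d • (P 0 * P β) := by
    intro β
    rw [hRm, Matrix.add_mul, smul_mul_assoc, smul_mul_assoc, Matrix.one_mul]
  have phi_RP : ∀ β : Fin (m + 1), β ≠ 0 → (inner ℝ z (matLin (Rm * P β) z) : ℝ) = 0 := by
    intro β hβ
    rw [hRPdec β, matLin_add, inner_add_right, matLin_smul, matLin_smul,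
      inner_smul_right, inner_smul_right, phi_Pa β hβ, phi_PaPb 0 β (Ne.symm hβ)]
    ring
  have hip_Q0w : ∀ β : Fin (m + 1), (inner ℝ (matLin (ptQzero l t) z) (matLin (Rm * P β) z) : ℝ)
      = (inner ℝ z (matLin (P β) z) : ℝ) := by
    intro β
    rw [inner_matLin_matLin, hQ0symm, ← Matrix.mul_assoc, hQR, Matrix.one_mul]
  have hPRP : ∀ α β : Fin (m + 1), P α * (Rm * P β)
      = (-c) • (P α * P β) + d • (P α * P 0 * P β) := by
    intro α β
    rw [hRPdec β, Matrix.mul_add, mul_smul_comm, mul_smul_comm, ← Matrix.mul_assoc]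
  have phi_PRP : ∀ α β : Fin (m + 1), α ≠ 0 → β ≠ 0 →
      (inner ℝ z (matLin (P α * (Rm * P β)) z) : ℝ) = 0 := by
    intro α β hα hβ
    rw [hPRP, matLin_add, inner_add_right, matLin_smul, matLin_smul,
      inner_smul_right, inner_smul_right]
    by_cases hab : α = β
    · subst hab
      rw [hsq α, phi_one, hPbP0Pb α hα, matLin_neg, inner_neg_right, phi_P0]
      linear_combination -I3
    · rw [phi_PaPb α β hab, phi_PaP0Pb α β hα hβ hab]
      ring
  have hwT : ∀ β : Fin m, w β ∈ ptTangent Q z := by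
    intro β
    rw [ptTangent]
    apply mem_orthogonal_span
    intro x hx
    rcases Set.mem_insert_iff.1 hx with rfl | ⟨α, rfl⟩
    · simp only [hwdef]
      exact phi_RP β.succ (Fin.succ_ne_zero β)
    · show (inner ℝ (matLin (Q α) z) (w β) : ℝ) = 0
      by_cases hα : α = 0
      · subst hα
        simp only [hwdef]
        rw [hQ0', hip_Q0w β.succ, phi_Pa β.succ (Fin.succ_ne_zero β)]
      · simp only [hwdef]
        rw [hQa α hα, inner_matLin_matLin, hPsymm]
        exact phi_PRP α β.succ hα (Fin.succ_ne_zero β)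
  have horthw : Orthonormal ℝ w := by
    rw [orthonormal_iff_ite]
    intro γ β
    simp only [hwdef]
    rw [inner_matLin_matLin]
    have htr : (Rm * P γ.succ)ᵀ = P γ.succ * Rm := by
      rw [Matrix.transpose_mul, hPsymm, hRsymm]
    rw [htr]
    have hassoc : P γ.succ * Rm * (Rm * P β.succ)
        = (c ^ 2 + d ^ 2) • (P γ.succ * P β.succ)
          + (-(2 * c * d)) • (P γ.succ * P 0 * P β.succ) := by
      rw [Matrix.mul_assoc (P γ.succ) Rm, ← Matrix.mul_assoc Rm Rm, hRsq,
        Matrix.add_mul, Matrix.mul_add, smul_mul_assoc, smul_mul_assoc,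
        Matrix.one_mul, mul_smul_comm, mul_smul_comm, ← Matrix.mul_assoc]
    rw [hassoc, matLin_add, inner_add_right, matLin_smul, matLin_smul,
      inner_smul_right, inner_smul_right]
    by_cases hab : γ = β
    · subst hab
      rw [hsq γ.succ, phi_one, hPbP0Pb γ.succ (Fin.succ_ne_zero γ), matLin_neg,
        inner_neg_right, phi_P0, if_pos rfl]
      linear_combination I2
    · rw [phi_PaPb γ.succ β.succ (fun h => hab (Fin.succ_injective _ h)),
        phi_PaP0Pb γ.succ β.succ (Fin.succ_ne_zero γ) (Fin.succ_ne_zero β)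
          (fun h => hab (Fin.succ_injective _ h)), if_neg hab]
      ring
  have hwS : ∀ β : Fin m, matLin (P β.succ) z ∈ Submodule.span ℝ (Set.range u) :=
    fun β => Submodule.subset_span ⟨β.succ.succ, by
      rw [hu, Fin.cons_succ, hQa β.succ (Fin.succ_ne_zero β)]⟩
  have hweig : ∀ β : Fin m, shapeOp (ptTangent Q z) (Q 0) ⟨w β, hwT β⟩ = 0 := by
    intro β
    have h2 : shapeOp (ptTangent Q z) (Q 0) ⟨w β, hwT β⟩
        = -((ptTangent Q z).orthogonalProjectionOnto (matLin (Q 0) (w β))) := rfl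
    have h3 : matLin (Q 0) (w β) = matLin (P β.succ) z := by
      simp only [hwdef]
      rw [hQ0', ← matLin_mul, ← Matrix.mul_assoc, hQR, Matrix.one_mul]
    have h4 : matLin (P β.succ) z ∈ (ptTangent Q z)ᗮ := by
      rw [hrange]
      exact (Submodule.le_orthogonal_orthogonal _) (hwS β)
    rw [h2, h3, Submodule.orthogonalProjectionOnto_apply_of_mem_orthogonal h4, neg_zero]
  have hr2 : m ≤ Module.finrank ℝ
      (Module.End.eigenspace (shapeOp (ptTangent Q z) (Q 0)) 0) := by
    set wT : Fin m → ptTangent Q z := fun β => ⟨w β, hwT β⟩ with hwT'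
    have horthwT : Orthonormal ℝ wT := by
      rw [orthonormal_iff_ite] at horthw ⊢
      intro i j
      simp only [hwT']
      rw [Submodule.coe_inner]
      exact horthw i j
    have hle : Submodule.span ℝ (Set.range wT)
        ≤ Module.End.eigenspace (shapeOp (ptTangent Q z) (Q 0)) 0 := by
      rw [Submodule.span_le]
      rintro _ ⟨β, rfl⟩
      simp only [hwT']
      rw [SetLike.mem_coe, Module.End.mem_eigenspace_iff, hweig β, zero_smul]
    have hfr := Submodule.finrank_mono hle
    rw [finrank_span_eq_card horthwT.linearIndependent, Fintype.card_fin] at hfr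
    exact hfr
  -- eigenvalue distinctness
  have hne12 : Real.cot t ≠ (0 : ℝ) := ne_of_gt hcot_pos
  have hne13 : Real.cot t ≠ -Real.tan t := by intro h; linarith
  have hne23 : (0 : ℝ) ≠ -Real.tan t := by intro h; linarith
  set A := shapeOp (ptTangent Q z) (Q 0) with hA
  set e1 := Module.End.eigenspace A (Real.cot t) with he1
  set e2 := Module.End.eigenspace A 0 with he2
  set e3 := Module.End.eigenspace A (-Real.tan t) with he3
  have hind := Module.End.eigenspaces_iSupIndep A
  have hd12 : Disjoint e1 e2 := hind.pairwiseDisjoint hne12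
  have hd3 : Disjoint (e1 ⊔ e2) e3 := by
    have h := hind (-Real.tan t)
    refine Disjoint.mono_left ?_ h.symm
    refine sup_le ?_ ?_
    · exact le_iSup₂ (f := fun j (_ : j ≠ -Real.tan t) => Module.End.eigenspace A j)
        (Real.cot t) hne13
    · exact le_iSup₂ (f := fun j (_ : j ≠ -Real.tan t) => Module.End.eigenspace A j)
        (0 : ℝ) hne23
  have hfin12 : Module.finrank ℝ (e1 ⊔ e2 : Submodule ℝ (ptTangent Q z))
      = Module.finrank ℝ e1 + Module.finrank ℝ e2 := by
    have h := Submodule.finrank_sup_add_finrank_inf_eq e1 e2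
    rw [hd12.eq_bot, finrank_bot] at h
    omega
  have hfin123 : Module.finrank ℝ (e1 ⊔ e2 ⊔ e3 : Submodule ℝ (ptTangent Q z))
      = Module.finrank ℝ e1 + Module.finrank ℝ e2 + Module.finrank ℝ e3 := by
    have h := Submodule.finrank_sup_add_finrank_inf_eq (e1 ⊔ e2) e3
    rw [hd3.eq_bot, finrank_bot, hfin12] at h
    omega
  have hle123 : Module.finrank ℝ (e1 ⊔ e2 ⊔ e3 : Submodule ℝ (ptTangent Q z))
      ≤ Module.finrank ℝ (ptTangent Q z) := Submodule.finrank_le _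
  have hr1' : Module.finrank ℝ e1 = l - m - 1 := by omega
  have hr2' : Module.finrank ℝ e2 = m := by omega
  have hr3' : Module.finrank ℝ e3 = l - m - 1 := by omega
  have htop : e1 ⊔ e2 ⊔ e3 = (⊤ : Submodule ℝ (ptTangent Q z)) := by
    apply Submodule.eq_top_of_finrank_eq
    omega
  set N : Fin 3 → Submodule ℝ (ptTangent Q z) := ![e1, e2, e3] with hN
  set μv : Fin 3 → ℝ := ![Real.cot t, 0, -Real.tan t] with hμ
  have hNeig : ∀ i, N i = Module.End.eigenspace A (μv i) := by
    intro i
    fin_cases i <;> simp [hN, hμ, he1, he2, he3]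
  have hinj : Function.Injective μv := by
    intro i j hij
    fin_cases i <;> fin_cases j <;>
      simp only [hμ, Matrix.cons_val_zero, Matrix.cons_val_one, Matrix.head_cons,
        Matrix.cons_val_two, Matrix.tail_cons] at hij ⊢ <;>
      first
        | rfl
        | exact absurd hij hne12
        | exact absurd hij hne13
        | exact absurd hij hne23
        | exact absurd hij.symm hne12
        | exact absurd hij.symm hne13
        | exact absurd hij.symm hne23
  have hindepN : iSupIndep N := by
    have heqN : N = fun i => Module.End.eigenspace A (μv i) := funext hNeig
    rw [heqN]
    exact hind.comp hinj
  have hsupN : (⨆ i, N i) = ⊤ := by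
    apply top_unique
    rw [← htop]
    refine sup_le (sup_le ?_ ?_) ?_
    · simpa [hN] using le_iSup N 0
    · simpa [hN] using le_iSup N 1
    · simpa [hN] using le_iSup N 2
  have hInt := DirectSum.isInternal_submodule_of_iSupIndep_of_iSup_eq_top hindepN hsupN
  have hmaps : ∀ i, Set.MapsTo A (N i) (N i) := by
    intro i x hx
    rw [hNeig i] at hx ⊢
    rw [SetLike.mem_coe, Module.End.mem_eigenspace_iff] at hx ⊢
    rw [hx, _root_.map_smul, hx]
  have htr := LinearMap.trace_eq_sum_trace_restrict hInt hmaps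
  have htrres : ∀ i, LinearMap.trace ℝ (N i) (A.restrict (hmaps i))
      = μv i * Module.finrank ℝ (N i) := by
    intro i
    have hres : A.restrict (hmaps i) = μv i • LinearMap.id := by
      refine LinearMap.ext fun x => Subtype.ext ?_
      have hx' : A ↑x = μv i • (↑x : ptTangent Q z) := by
        have hle : N i ≤ Module.End.eigenspace A (μv i) := le_of_eq (hNeig i)
        exact Module.End.mem_eigenspace_iff.1 (hle x.2)
      show A ↑x = _
      simp [hx']
    rw [hres, _root_.map_smul, LinearMap.trace_id, smul_eq_mul]
  have hf0 : Module.finrank ℝ (N 0) = l - m - 1 := by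
    rw [show N 0 = e1 by simp [hN]]; exact hr1'
  have hf1 : Module.finrank ℝ (N 1) = m := by
    rw [show N 1 = e2 by simp [hN]]; exact hr2'
  have hf2 : Module.finrank ℝ (N 2) = l - m - 1 := by
    rw [show N 2 = e3 by simp [hN]]; exact hr3'
  have hcast : ((l - m - 1 : ℕ) : ℝ) = (l : ℝ) - m - 1 := by
    have h1 : (l - m - 1 : ℕ) = l - (m + 1) := by omega
    rw [h1, Nat.cast_sub (by omega)]
    push_cast
    ring
  have hμ0 : μv 0 = Real.cot t := by simp [hμ]
  have hμ1 : μv 1 = (0 : ℝ) := by simp [hμ]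
  have hμ2 : μv 2 = -Real.tan t := by simp [hμ]
  have htrace1 : LinearMap.trace ℝ (ptTangent Q z) A
      = ((l : ℝ) - m - 1) * (Real.cot t - Real.tan t) := by
    rw [htr, Fin.sum_univ_three, htrres 0, htrres 1, htrres 2, hf0, hf1, hf2,
      hμ0, hμ1, hμ2, hcast]
    ring
  have hcot2 : Real.cot t - Real.tan t = 2 * Real.cot (2 * t) := by
    rw [hco, hta, Real.cot_eq_cos_div_sin, Real.sin_two_mul, Real.cos_two_mul']
    field_simp
  refine ⟨hr1', hr2', hr3', htrace1, ?_⟩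
  rw [htrace1, hcot2]
  ring


end
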